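/- Let Γ be a preGarside trickle graph and let N be a submonoid of Tr⁺(Γ). Then N is a parabolic submonoid of Tr⁺(Γ) if and only if there exists a parabolic subgraph Γ₁ of Γ such that N is the image of Tr⁺(Γ₁) under the canonical (injective) homomorphism Tr⁺(Γ₁) → Tr⁺(Γ), i.e. N is the submonoid generated by V(Γ₁). -/

import Mathlib

open scoped Classical

universe u

namespace SimpleGraph

/-- `y` belongs to the star of `x` in `G` (i.e. `y = x` or `y` is a neighbour of `x`). -/
def InStar {V : Type u} (G : SimpleGraph V) (x y : V) : Prop := y = x ∨ G.Adj x y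

end SimpleGraph

/-- A **trickle graph**: a simplicial graph together with a partial order on the vertices,
a vertex labeling `mu` with values in `ℕ≥2 ∪ {∞}`, and, for every vertex `x`, an automorphism
`phi x` of the star of `x` (encoded as a permutation of the whole vertex set fixing every
vertex outside of the star of `x`), subject to conditions (a)–(g) of Bellingeri–Chemin–Paris. -/
structure TrickleGraph (V : Type u) [PartialOrder V] where
  /-- the underlying simplicial graph -/
  graph : SimpleGraph V
  /-- the vertex labeling, with `⊤` playing the role of `∞` -/
  mu : V → ℕ∞
  /-- the automorphism of the star of each vertex, extended by the identity -/
  phi : V → Equiv.Perm V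
  two_le_mu : ∀ x : V, 2 ≤ mu x
  /-- condition (a) -/
  adj_of_lt : ∀ x y : V, x < y → graph.Adj x y
  /-- `phi x` is supported on the star of `x` -/
  phi_apply_of_not_inStar : ∀ x y : V, ¬ graph.InStar x y → phi x y = y
  /-- `phi x` maps the star of `x` to itself -/
  inStar_phi : ∀ x y : V, graph.InStar x y → graph.InStar x (phi x y)
  /-- `phi x` is a graph automorphism of the (full subgraph spanned by the) star of `x` -/
  adj_phi_iff : ∀ x y z : V, graph.InStar x y → graph.InStar x z →
      (graph.Adj (phi x y) (phi x z) ↔ graph.Adj y z)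
  /-- condition (b) -/
  adj_incomp : ∀ x y z : V, graph.Adj x y → ¬ x ≤ y → ¬ y ≤ x → z ≤ y →
      graph.Adj x z ∧ ¬ x ≤ z ∧ ¬ z ≤ x
  /-- condition (c) -/
  le_phi_iff : ∀ x y z : V, graph.InStar x y → graph.InStar x z →
      (phi x z ≤ phi x y ↔ z ≤ y)
  /-- condition (d) -/
  lt_of_phi_ne : ∀ x y : V, graph.InStar x y → phi x y ≠ y → y < x
  /-- condition (e): if `mu x` is finite then the order of `phi x` divides `mu x` -/
  phi_pow_mu : ∀ x : V, phi x ^ WithTop.untopD 0 (mu x) = 1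
  /-- condition (f) -/
  mu_phi : ∀ x y : V, graph.InStar x y → mu (phi x y) = mu y
  /-- condition (g) -/
  phi_phi : ∀ x y z : V, z < y → y < x →
      phi x (phi y z) = phi (phi x y) (phi x z)

namespace TrickleGraph

variable {V : Type u} [PartialOrder V]

/-- The set of defining relators of the trickle group: `x ^ (mu x)` whenever `mu x ≠ ∞`, and
`phi_x(y) · x · (phi_y(x) · y)⁻¹` for every edge `{x, y}`. -/
def rels (T : TrickleGraph V) : Set (FreeGroup V) :=
  {r | ∃ (x : V) (n : ℕ), T.mu x = (n : ℕ∞) ∧ r = FreeGroup.of x ^ n} ∪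
  {r | ∃ x y : V, T.graph.Adj x y ∧
      r = FreeGroup.of (T.phi x y) * FreeGroup.of x *
          (FreeGroup.of (T.phi y x) * FreeGroup.of y)⁻¹}

end TrickleGraph

/-- The **trickle group** of a trickle graph. -/
abbrev TrickleGroup {V : Type u} [PartialOrder V] (T : TrickleGraph V) : Type u :=
  PresentedGroup T.rels

namespace TrickleGraph

variable {V : Type u} [PartialOrder V]

/-- The image of a vertex in the trickle group. -/
def gen (T : TrickleGraph V) (x : V) : TrickleGroup T := PresentedGroup.of x

/-- `mu` converted to a natural number, with `∞` mapped to `0` (so that `ZMod (T.muNat x)`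
is the group `ℤ_{mu x}` of the paper, `ZMod 0 = ℤ` corresponding to `mu x = ∞`). -/
def muNat (T : TrickleGraph V) (x : V) : ℕ := WithTop.untopD 0 (T.mu x)

/-- The power `phi_x^a` for an exponent `a ∈ ℤ_{mu x}`; it is well defined on representatives
by condition (e). -/
def phiPow (T : TrickleGraph V) (x : V) (a : ZMod (T.muNat x)) : Equiv.Perm V :=
  T.phi x ^ (ZMod.cast a : ℤ)

theorem mu_phi_apply (T : TrickleGraph V) (x y : V) : T.mu (T.phi x y) = T.mu y := by
  by_cases h : T.graph.InStar x y
  · exact T.mu_phi x y h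
  · rw [T.phi_apply_of_not_inStar x y h]

theorem mu_phi_zpow (T : TrickleGraph V) (x : V) :
    ∀ (n : ℤ) (y : V), T.mu ((T.phi x ^ n) y) = T.mu y := by
  have hinv : ∀ y : V, T.mu ((T.phi x)⁻¹ y) = T.mu y := by
    intro y
    conv_rhs => rw [← Equiv.apply_symm_apply (T.phi x) y]
    exact (T.mu_phi_apply x ((T.phi x)⁻¹ y)).symm
  intro n
  induction n using Int.induction_on with
  | zero => intro y; simp
  | succ k ih =>
      intro y
      have h : (T.phi x ^ ((k : ℤ) + 1)) y = (T.phi x ^ (k : ℤ)) (T.phi x y) := by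
        rw [zpow_add_one]; rfl
      rw [h, ih (T.phi x y), T.mu_phi_apply]
  | pred k ih =>
      intro y
      have h : (T.phi x ^ (-(k : ℤ) - 1)) y = (T.phi x ^ (-(k : ℤ))) ((T.phi x)⁻¹ y) := by
        rw [zpow_sub_one]; rfl
      rw [h, ih ((T.phi x)⁻¹ y), hinv]

theorem mu_phiPow (T : TrickleGraph V) (x : V) (a : ZMod (T.muNat x)) (y : V) :
    T.mu ((T.phiPow x a) y) = T.mu y :=
  T.mu_phi_zpow x _ y

theorem muNat_phiPow (T : TrickleGraph V) (x : V) (a : ZMod (T.muNat x)) (y : V) :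
    T.muNat ((T.phiPow x a) y) = T.muNat y :=
  congrArg (fun m : ℕ∞ => WithTop.untopD 0 m) (T.mu_phiPow x a y)

end TrickleGraph

/-- Transport of a `ZMod` element along an equality of moduli. -/
def zmodCongr {m k : ℕ} (h : m = k) (a : ZMod m) : ZMod k := by subst h; exact a

theorem zmodCongr_ne_zero {m k : ℕ} (h : m = k) {a : ZMod m} (ha : a ≠ 0) :
    zmodCongr h a ≠ 0 := by subst h; exact ha

/-- A **syllable** `x^a`, where `x` is a vertex and `a ∈ ℤ_{mu x} \ {0}`. -/
def Syllable {V : Type u} [PartialOrder V] (T : TrickleGraph V) : Type u :=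
  Σ x : V, {a : ZMod (T.muNat x) // a ≠ 0}

namespace Syllable

variable {V : Type u} [PartialOrder V] {T : TrickleGraph V}

/-- The element of the trickle group represented by a syllable. -/
def elm (s : Syllable T) : TrickleGroup T :=
  (PresentedGroup.of s.1 : TrickleGroup T) ^ (ZMod.cast s.2.val : ℤ)

end Syllable

/-- Syllabic words. -/
abbrev SylWord {V : Type u} [PartialOrder V] (T : TrickleGraph V) := List (Syllable T)

/-- The element of the trickle group represented by a syllabic word. -/
def SylWord.eval {V : Type u} [PartialOrder V] {T : TrickleGraph V} (w : SylWord T) :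
    TrickleGroup T :=
  (w.map Syllable.elm).prod

/-- The defining relations of the **preGarside trickle monoid** `Tr⁺(Γ)`:
`phi_x(y) · x = phi_y(x) · y` for every edge `{x, y}`. -/
def TrickleGraph.monRels {V : Type u} [PartialOrder V] (T : TrickleGraph V) :
    FreeMonoid V → FreeMonoid V → Prop := fun u v =>
  ∃ x y : V, T.graph.Adj x y ∧
    u = FreeMonoid.of (T.phi x y) * FreeMonoid.of x ∧
    v = FreeMonoid.of (T.phi y x) * FreeMonoid.of y

/-- The **preGarside trickle monoid** `Tr⁺(Γ)` of a (preGarside) trickle graph. -/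
abbrev TrickleMonoid {V : Type u} [PartialOrder V] (T : TrickleGraph V) : Type u :=
  PresentedMonoid T.monRels

section PreGarside

variable {M : Type*} [Monoid M]

/-- Left divisibility: `a ≤_L b` iff `a c = b` for some `c`. -/
def DvdL (a b : M) : Prop := ∃ c, a * c = b

/-- Right divisibility: `a ≤_R b` iff `c a = b` for some `c`. -/
def DvdR (a b : M) : Prop := ∃ c, c * a = b

/-- `m` is the least common upper bound of `a` and `b` for left divisibility. -/
def IsLcmL (a b m : M) : Prop :=
  (DvdL a m ∧ DvdL b m) ∧ ∀ c, DvdL a c → DvdL b c → DvdL m c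

/-- `m` is the least common upper bound of `a` and `b` for right divisibility. -/
def IsLcmR (a b m : M) : Prop :=
  (DvdR a m ∧ DvdR b m) ∧ ∀ c, DvdR a c → DvdR b c → DvdR m c

/-- A **preGarside monoid**: a cancellative atomic monoid in which any two elements admitting a
common upper bound for left (resp. right) divisibility admit a least one. -/
def IsPreGarsideMonoid (M : Type*) [Monoid M] : Prop :=
  (∀ a b c d : M, c * a * d = c * b * d → a = b) ∧
  (∃ ν : M → ℕ, (∀ a : M, ν a = 0 ↔ a = 1) ∧ ∀ a b : M, ν a + ν b ≤ ν (a * b)) ∧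
  (∀ a b : M, (∃ c, DvdL a c ∧ DvdL b c) → ∃ m, IsLcmL a b m) ∧
  (∀ a b : M, (∃ c, DvdR a c ∧ DvdR b c) → ∃ m, IsLcmR a b m)

/-- A **Garside element**: a balanced element whose set of divisors generates the monoid. -/
def IsGarsideElement (Δ : M) : Prop :=
  {a : M | DvdL a Δ} = {a : M | DvdR a Δ} ∧ Submonoid.closure {a : M | DvdL a Δ} = ⊤

/-- A **Garside monoid**: a preGarside monoid containing a Garside element. -/
def IsGarsideMonoid (M : Type*) [Monoid M] : Prop :=
  IsPreGarsideMonoid M ∧ ∃ Δ : M, IsGarsideElement Δ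

/-- A **special** submonoid: closed under taking factors. -/
def Submonoid.IsSpecial (N : Submonoid M) : Prop := ∀ a b : M, a * b ∈ N → a ∈ N ∧ b ∈ N

/-- A **parabolic submonoid** of a (preGarside) monoid: a special submonoid closed under the
least common upper bounds `∨_L` and `∨_R` whenever they exist. -/
def Submonoid.IsParabolic (N : Submonoid M) : Prop :=
  N.IsSpecial ∧
  (∀ a b m : M, a ∈ N → b ∈ N → IsLcmL a b m → m ∈ N) ∧
  (∀ a b m : M, a ∈ N → b ∈ N → IsLcmR a b m → m ∈ N)

end PreGarside

/-- Relators defining the **enveloping group** of a monoid `M`: the enveloping group is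
generated by the elements of `M` subject to the relations `of (a b) = of a · of b`. -/
def envRels (M : Type u) [Monoid M] : Set (FreeGroup M) :=
  {r | ∃ a b : M, r = FreeGroup.of (a * b) * (FreeGroup.of a * FreeGroup.of b)⁻¹}

/-- The **enveloping group** `G(M)` of a monoid `M`. -/
abbrev EnvGroup (M : Type u) [Monoid M] : Type u := PresentedGroup (envRels M)

/-- The natural map `M → G(M)`. -/
def envOf (M : Type u) [Monoid M] (a : M) : EnvGroup M := PresentedGroup.of a

/-- A **parabolic subgraph** of a trickle graph, given by its vertex set `X`: a full subgraph
such that for every `x ∈ X` the automorphism `φ_x` stabilizes the star of `x` in the subgraph. -/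
def TrickleGraph.IsParabolicSet {V : Type u} [PartialOrder V] (T : TrickleGraph V)
    (X : Set V) : Prop :=
  ∀ x ∈ X, (T.phi x) '' {y | y ∈ X ∧ T.graph.InStar x y} = {y | y ∈ X ∧ T.graph.InStar x y}

theorem Equiv.Perm.apply_inv_self {α : Type*} (f : Equiv.Perm α) (x : α) : f (f⁻¹ x) = x :=
  Equiv.apply_symm_apply f x

theorem Equiv.Perm.inv_apply_self {α : Type*} (f : Equiv.Perm α) (x : α) : f⁻¹ (f x) = x :=
  Equiv.symm_apply_apply f x

namespace TrickleProof

variable {A : Type*}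

/-- the basic relation: `[x, c x y] ↔ [y, c y x]` for adjacent `x, y`. -/
def RRel (adj : A → A → Prop) (c : A → A → A) (u v : List A) : Prop :=
  ∃ x y, adj x y ∧ u = [x, c x y] ∧ v = [y, c y x]

/-- one-step rewriting inside a word. -/
def Step (adj : A → A → Prop) (c : A → A → A) (u v : List A) : Prop :=
  ∃ p q u' v', RRel adj c u' v' ∧ u = p ++ u' ++ q ∧ v = p ++ v' ++ q

/-- the congruence generated by the relations, as a relation on lists. -/
def TEq (adj : A → A → Prop) (c : A → A → A) : List A → List A → Prop :=
  Relation.ReflTransGen (Step adj c)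

/-- Hypotheses on the complement making the presentation complete. -/
structure Good (adj : A → A → Prop) (c : A → A → A) : Prop where
  symm : ∀ {x y}, adj x y → adj y x
  ne : ∀ {x y}, adj x y → x ≠ y
  inj : ∀ {z x y}, adj z x → adj z y → c z x = c z y → x = y
  cube : ∀ {x y z}, x ≠ y → x ≠ z → y ≠ z → adj x z → adj y z → adj (c z x) (c z y) →
    adj x y ∧ adj (c x z) (c x y) ∧ c (c x z) (c x y) = c (c z x) (c z y)

variable {adj : A → A → Prop} {c : A → A → A}

theorem TEq.refl (u : List A) : TEq adj c u u := Relation.ReflTransGen.refl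

theorem TEq.trans {u v w : List A} (h1 : TEq adj c u v) (h2 : TEq adj c v w) :
    TEq adj c u w := Relation.ReflTransGen.trans h1 h2

theorem Step.symm (G : Good adj c) {u v : List A} (h : Step adj c u v) : Step adj c v u := by
  obtain ⟨p, q, u', v', ⟨x, y, hxy, hu, hv⟩, h1, h2⟩ := h
  exact ⟨p, q, v', u', ⟨y, x, G.symm hxy, hv, hu⟩, h2, h1⟩

theorem TEq.symm (G : Good adj c) {u v : List A} (h : TEq adj c u v) : TEq adj c v u := by
  induction h with
  | refl => exact TEq.refl _
  | tail h1 h2 ih => exact Relation.ReflTransGen.trans (Relation.ReflTransGen.single (h2.symm G)) ih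

theorem Step.append {u v p q : List A} (h : Step adj c u v) :
    Step adj c (p ++ u ++ q) (p ++ v ++ q) := by
  obtain ⟨p', q', u', v', hr, h1, h2⟩ := h
  refine ⟨p ++ p', q' ++ q, u', v', hr, ?_, ?_⟩ <;> subst h1 h2 <;> simp

theorem TEq.append {u v p q : List A} (h : TEq adj c u v) :
    TEq adj c (p ++ u ++ q) (p ++ v ++ q) := by
  induction h with
  | refl => exact TEq.refl _
  | tail h1 h2 ih => exact ih.trans (Relation.ReflTransGen.single h2.append)

theorem TEq.append_right {u v q : List A} (h : TEq adj c u v) :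
    TEq adj c (u ++ q) (v ++ q) := by
  have := h.append (p := []) (q := q); simpa using this

theorem TEq.append_left {u v p : List A} (h : TEq adj c u v) :
    TEq adj c (p ++ u) (p ++ v) := by
  have := h.append (p := p) (q := []); simpa using this

theorem TEq.cons {u v : List A} (x : A) (h : TEq adj c u v) :
    TEq adj c (x :: u) (x :: v) := by
  have := h.append_left (p := [x]); simpa using this

theorem TEq.congr {u v u' v' : List A} (h1 : TEq adj c u u') (h2 : TEq adj c v v') :
    TEq adj c (u ++ v) (u' ++ v') :=
  (h1.append_right (q := v)).trans (h2.append_left (p := u'))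

/-- the single step coming from a relation, with a tail. -/
theorem step_rel {x y : A} (h : adj x y) (q : List A) :
    TEq adj c (x :: c x y :: q) (y :: c y x :: q) := by
  refine Relation.ReflTransGen.single ⟨[], q, [x, c x y], [y, c y x], ⟨x, y, h, rfl, rfl⟩, ?_, ?_⟩
    <;> simp

/-- **Key lemma** (completeness of the presentation): if `x·u ≈ y·v` then either `x = y`
and `u ≈ v`, or `x, y` are adjacent and the words reverse accordingly. -/
theorem key (G : Good adj c) :
    ∀ n (x : A) (u : List A) (y : A) (v : List A), u.length ≤ n →
      TEq adj c (x :: u) (y :: v) →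
      (x = y ∧ TEq adj c u v) ∨
      (adj x y ∧ ∃ w, TEq adj c u (c x y :: w) ∧ TEq adj c v (c y x :: w)) := by
  intro n
  induction n using Nat.strong_induction_on with
  | _ n IH =>
  intro x u y v hlen h
  have H : ∀ W, TEq adj c W (y :: v) → ∀ x u, W = x :: u → u.length ≤ n →
      (x = y ∧ TEq adj c u v) ∨
      (adj x y ∧ ∃ w, TEq adj c u (c x y :: w) ∧ TEq adj c v (c y x :: w)) := by
    intro W hW
    induction hW using Relation.ReflTransGen.head_induction_on with
    | refl =>
      intro x u hEq _
      injection hEq with h1 h2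
      subst h1; subst h2
      exact Or.inl ⟨rfl, TEq.refl _⟩
    | @head W W₁ hstep hchain ih =>
      intro x u hEq hlen
      obtain ⟨p, q, u', v', ⟨a, b, hab, hu', hv'⟩, h1, h2⟩ := hstep
      subst hu'; subst hv'; subst hEq
      cases p with
      | nil =>
        have h1' : x = a ∧ u = c a b :: q := by simpa using h1
        obtain ⟨hxa, hu⟩ := h1'
        subst hxa; subst hu
        have hW₁ : W₁ = b :: (c b x :: q) := by simpa using h2
        have hlen' : (c b x :: q).length ≤ n := by
          simpa using hlen
        rcases ih b (c b x :: q) hW₁ hlen' with ⟨rfl, h2'⟩ | ⟨hadjby, w', h3, h4⟩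
        · exact Or.inr ⟨hab, q, TEq.refl _, h2'.symm G⟩
        · have hqn : q.length < n := by simpa using Nat.lt_of_lt_of_le (Nat.lt_succ_self _) hlen
          rcases IH q.length hqn (c b x) q (c b y) w' le_rfl h3 with
            ⟨hcc, hqw⟩ | ⟨hadj2, w₂, h5, h6⟩
          · have hay : x = y := G.inj (G.symm hab) hadjby hcc
            subst hay
            exact Or.inl ⟨rfl, (TEq.cons _ hqw).trans (h4.symm G)⟩
          · have hay_ne : x ≠ y := fun hh => G.ne hadj2 (by rw [hh])
            have hab_ne : x ≠ b := G.ne hab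
            have hyb_ne : y ≠ b := fun hh => G.ne hadjby hh.symm
            obtain ⟨hay, hA, hE1⟩ :=
              G.cube hay_ne hab_ne hyb_ne hab (G.symm hadjby) hadj2
            obtain ⟨-, hB, hE2⟩ :=
              G.cube (Ne.symm hay_ne) hyb_ne hab_ne (G.symm hadjby) hab (G.symm hadj2)
            obtain ⟨-, hC, hE3⟩ :=
              G.cube hab_ne hay_ne (fun hh => hyb_ne hh.symm) hay hadjby (G.symm hB)
            refine Or.inr ⟨hay, c (c x y) (c x b) :: w₂, ?_, ?_⟩
            · refine (TEq.cons (c x b) h5).trans ?_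
              rw [← hE1]
              exact step_rel hA w₂
            · refine h4.trans ((TEq.cons (c y b) h6).trans ?_)
              rw [← hE2]
              refine (step_rel hB w₂).trans ?_
              rw [hE3]
              exact TEq.refl _
      | cons x' p' =>
        have h1' : x :: u = x' :: (p' ++ [a, c a b] ++ q) := by simpa using h1
        injection h1' with hxx hu; subst hxx; subst hu
        have hW₁ : W₁ = x :: (p' ++ [b, c b a] ++ q) := by simpa using h2
        have hlen' : (p' ++ [b, c b a] ++ q).length ≤ n := by
          simpa using hlen
        have step_u : Step adj c (p' ++ [a, c a b] ++ q) (p' ++ [b, c b a] ++ q) :=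
          ⟨p', q, _, _, ⟨a, b, hab, rfl, rfl⟩, rfl, rfl⟩
        rcases ih x _ hW₁ hlen' with ⟨rfl, h2'⟩ | ⟨hadj, w, hu₁, hv⟩
        · exact Or.inl ⟨rfl, (Relation.ReflTransGen.single step_u).trans h2'⟩
        · exact Or.inr ⟨hadj, w, (Relation.ReflTransGen.single step_u).trans hu₁, hv⟩
  exact H _ h x u rfl hlen

theorem cancel (G : Good adj c) {x : A} {u v : List A} (h : TEq adj c (x :: u) (x :: v)) :
    TEq adj c u v := by
  rcases key G u.length x u x v le_rfl h with ⟨-, h'⟩ | ⟨hadj, -⟩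
  · exact h'
  · exact absurd rfl (G.ne hadj)

/-- **Reversing lemma**: two words over `X` admitting a common right multiple admit a
least one over `X`. -/
theorem rev (G : Good adj c) (X : Set A)
    (hX : ∀ ⦃x y⦄, adj x y → x ∈ X → y ∈ X → c x y ∈ X) :
    ∀ n (u v : List A), u.length + v.length ≤ n → (∀ a ∈ u, a ∈ X) → (∀ a ∈ v, a ∈ X) →
    (∃ s t, TEq adj c (u ++ s) (v ++ t)) →
    ∃ u₁ v₁, (∀ a ∈ u₁, a ∈ X) ∧ (∀ a ∈ v₁, a ∈ X) ∧
      u₁.length ≤ v.length ∧ v₁.length ≤ u.length ∧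
      TEq adj c (u ++ u₁) (v ++ v₁) ∧
      (∀ s t, TEq adj c (u ++ s) (v ++ t) →
        ∃ r, TEq adj c s (u₁ ++ r) ∧ TEq adj c t (v₁ ++ r)) := by
  intro n
  induction n using Nat.strong_induction_on with
  | _ n IHn =>
  intro u v hn hu hv hex
  cases u with
  | nil =>
    refine ⟨v, [], hv, by simp, by simp, by simp, by simpa using TEq.refl v, ?_⟩
    intro s t h
    exact ⟨t, by simpa using h, by simpa using TEq.refl t⟩
  | cons x u' =>
  cases v with
  | nil =>
    refine ⟨[], x :: u', by simp, hu, by simp, by simp, by simpa using TEq.refl _, ?_⟩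
    intro s t h
    refine ⟨s, by simpa using TEq.refl s, TEq.symm G (by simpa using h)⟩
  | cons y v' =>
    have hu' : ∀ a ∈ u', a ∈ X := fun a ha => hu a (by simp [ha])
    have hv' : ∀ a ∈ v', a ∈ X := fun a ha => hv a (by simp [ha])
    have hnn : u'.length + 1 + (v'.length + 1) ≤ n := by simpa using hn
    by_cases hxy : x = y
    · subst hxy
      obtain ⟨s, t, hst⟩ := hex
      have hst' : TEq adj c (u' ++ s) (v' ++ t) := cancel G (by simpa using hst)
      obtain ⟨u₁, v₁, hu₁X, hv₁X, hl1, hl2, hmain, huniv⟩ :=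
        IHn (u'.length + v'.length) (by omega) u' v' le_rfl hu' hv' ⟨s, t, hst'⟩
      refine ⟨u₁, v₁, hu₁X, hv₁X, by simpa using Nat.le_succ_of_le hl1,
        by simpa using Nat.le_succ_of_le hl2, by simpa using TEq.cons x hmain, ?_⟩
      intro s t h
      exact huniv s t (cancel G (by simpa using h))
    · obtain ⟨s, t, hst⟩ := hex
      have hst' : TEq adj c (x :: (u' ++ s)) (y :: (v' ++ t)) := by simpa using hst
      rcases key G _ x _ y _ le_rfl hst' with ⟨h, -⟩ | ⟨hadj, w, h1, h2⟩
      · exact absurd h hxy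
      have hxX : x ∈ X := hu x (by simp)
      have hyX : y ∈ X := hv y (by simp)
      have hcxyX : c x y ∈ X := hX hadj hxX hyX
      have hcyxX : c y x ∈ X := hX (G.symm hadj) hyX hxX
      obtain ⟨α, β, hαX, hβX, hαl, hβl, hmain1, huniv1⟩ :=
        IHn (u'.length + 1) (by omega) u' [c x y] le_rfl hu'
          (by simpa using hcxyX) ⟨s, w, by simpa using h1⟩
      obtain ⟨r₁, hr1, hr2⟩ := huniv1 s w (by simpa using h1)
      simp only [List.length_singleton] at hαl hβl
      obtain ⟨γ, δ, hγX, hδX, hγl, hδl, hmain2, huniv2⟩ :=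
        IHn (v'.length + (1 + β.length)) (by omega) v' (c y x :: β) (by simp) hv'
          (by
            intro a ha
            rcases List.mem_cons.mp ha with rfl | ha
            · exact hcyxX
            · exact hβX a ha)
          ⟨t, r₁, h2.trans (by simpa using TEq.cons (c y x) hr2)⟩
      simp only [List.length_cons] at hγl hδl
      refine ⟨α ++ δ, γ, ?_, hγX, ?_, ?_, ?_, ?_⟩
      · intro a ha
        rcases List.mem_append.mp ha with ha | ha
        · exact hαX a ha
        · exact hδX a ha
      · simp only [List.length_append, List.length_cons]
        omega
      · simp only [List.length_cons]
        omega
      · -- main equivalence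
        have A1 : TEq adj c (u' ++ (α ++ δ)) (c x y :: (β ++ δ)) := by
          simpa [List.append_assoc] using hmain1.append_right (q := δ)
        have A3 : TEq adj c (c y x :: (β ++ δ)) (v' ++ γ) := by
          simpa [List.append_assoc] using TEq.symm G hmain2
        have := ((TEq.cons x A1).trans (step_rel hadj (β ++ δ))).trans (TEq.cons y A3)
        simpa using this
      · intro s₀ t₀ h₀
        have h₀' : TEq adj c (x :: (u' ++ s₀)) (y :: (v' ++ t₀)) := by simpa using h₀
        rcases key G _ x _ y _ le_rfl h₀' with ⟨h, -⟩ | ⟨-, w₀, k1, k2⟩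
        · exact absurd h hxy
        obtain ⟨r, hsr, hwr⟩ := huniv1 s₀ w₀ (by simpa using k1)
        obtain ⟨r₂, htr, hrr⟩ := huniv2 t₀ r
          (k2.trans (by simpa using TEq.cons (c y x) hwr))
        refine ⟨r₂, ?_, htr⟩
        refine hsr.trans ?_
        have := (hrr.append_left (p := α))
        simpa using this

section TricklePart

variable {V : Type u} [PartialOrder V] (T : TrickleGraph V)

open SimpleGraph

theorem instar_self (x : V) : T.graph.InStar x x := Or.inl rfl

theorem instar_of_adj {x y : V} (h : T.graph.Adj x y) : T.graph.InStar x y := Or.inr h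

theorem phi_fix {x y : V} (h : ¬ y < x) : T.phi x y = y := by
  by_cases hs : T.graph.InStar x y
  · by_contra hne
    exact h (T.lt_of_phi_ne x y hs hne)
  · exact T.phi_apply_of_not_inStar x y hs

theorem phi_self (x : V) : T.phi x x = x := phi_fix T (lt_irrefl x)

theorem phi_lt {x y : V} (h : y < x) : T.phi x y < x := by
  have hsy : T.graph.InStar x y := Or.inr (T.adj_of_lt y x h).symm
  have hle : T.phi x y ≤ T.phi x x :=
    (T.le_phi_iff x x y (instar_self T x) hsy).mpr h.le
  rw [phi_self T x] at hle
  refine lt_of_le_of_ne hle (fun he => ?_)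
  have : y = x := (T.phi x).injective (by rw [he, phi_self T x])
  exact absurd this h.ne

theorem phi_inv_fix {x y : V} (h : ¬ y < x) : (T.phi x)⁻¹ y = y := by
  have hz : T.phi x ((T.phi x)⁻¹ y) = y := Equiv.Perm.apply_inv_self _ y
  by_cases hlt : (T.phi x)⁻¹ y < x
  · exact absurd (hz ▸ phi_lt T hlt) h
  · exact ((phi_fix T hlt).symm.trans hz)

theorem phi_inv_lt {x y : V} (h : y < x) : (T.phi x)⁻¹ y < x := by
  by_contra hlt
  have h2 : T.phi x ((T.phi x)⁻¹ y) = (T.phi x)⁻¹ y := phi_fix T hlt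
  have h3 : T.phi x ((T.phi x)⁻¹ y) = y := Equiv.Perm.apply_inv_self _ y
  rw [h2.symm.trans h3] at hlt
  exact hlt h

theorem lt_phi_iff {x y z : V} (hy : T.graph.InStar x y) (hz : T.graph.InStar x z) :
    T.phi x z < T.phi x y ↔ z < y := by
  constructor
  · intro h
    refine lt_of_le_of_ne ((T.le_phi_iff x y z hy hz).mp h.le) (fun he => ?_)
    exact absurd (he ▸ rfl : T.phi x z = T.phi x y) h.ne
  · intro h
    refine lt_of_le_of_ne ((T.le_phi_iff x y z hy hz).mpr h.le) (fun he => ?_)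
    exact absurd ((T.phi x).injective he) h.ne

theorem instar_phi_inv {x y : V} (h : T.graph.InStar x y) :
    T.graph.InStar x ((T.phi x)⁻¹ y) := by
  by_cases hlt : y < x
  · exact Or.inr (T.adj_of_lt _ x (phi_inv_lt T hlt)).symm
  · rw [phi_inv_fix T hlt]; exact h

theorem phi_comm {x y : V} (hadj : T.graph.Adj x y) (hxy : ¬ x ≤ y) (hyx : ¬ y ≤ x) :
    T.phi x * T.phi y = T.phi y * T.phi x := by
  ext w
  simp only [Equiv.Perm.mul_apply]
  by_cases hwy : w < y
  · obtain ⟨-, -, hwx⟩ := T.adj_incomp x y w hadj hxy hyx hwy.le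
    have h1 : T.phi x w = w := phi_fix T (fun h => hwx h.le)
    obtain ⟨-, -, hwx2⟩ := T.adj_incomp x y (T.phi y w) hadj hxy hyx (phi_lt T hwy).le
    have h2 : T.phi x (T.phi y w) = T.phi y w := phi_fix T (fun h => hwx2 h.le)
    rw [h1, h2]
  · have h1 : T.phi y w = w := phi_fix T hwy
    by_cases hwx : w < x
    · have h2 : T.phi y (T.phi x w) = T.phi x w := phi_fix T (fun hlt =>
        (T.adj_incomp x y (T.phi x w) hadj hxy hyx hlt.le).2.2 (phi_lt T hwx).le)
      rw [h1, h2]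
    · have h2 : T.phi x w = w := phi_fix T hwx
      simp [h1, h2]

theorem phi_conj {x y : V} (h : y < x) :
    T.phi x * T.phi y = T.phi (T.phi x y) * T.phi x := by
  ext w
  simp only [Equiv.Perm.mul_apply]
  by_cases hwy : w < y
  · exact T.phi_phi x y w hwy h
  · have h1 : T.phi y w = w := phi_fix T hwy
    have hIxy : T.graph.InStar x y := Or.inr (T.adj_of_lt y x h).symm
    have h2 : T.phi (T.phi x y) (T.phi x w) = T.phi x w := by
      refine phi_fix T (fun hlt => ?_)
      by_cases hwx : w < x
      · have hIxw : T.graph.InStar x w := Or.inr (T.adj_of_lt w x hwx).symm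
        exact hwy ((lt_phi_iff T hIxy hIxw).mp hlt)
      · rw [phi_fix T hwx] at hlt
        exact hwx (hlt.trans (phi_lt T h))
    rw [h1, h2]

theorem phi_inv_comm {x y : V} (hadj : T.graph.Adj x y) (hxy : ¬ x ≤ y) (hyx : ¬ y ≤ x) :
    (T.phi x)⁻¹ * (T.phi y)⁻¹ = (T.phi y)⁻¹ * (T.phi x)⁻¹ := by
  rw [← mul_inv_rev, ← mul_inv_rev, phi_comm T hadj hxy hyx]

theorem phi_inv_conj {x y : V} (h : y < x) :
    (T.phi x)⁻¹ * (T.phi y)⁻¹ = (T.phi ((T.phi x)⁻¹ y))⁻¹ * (T.phi x)⁻¹ := by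
  have h0 : (T.phi x)⁻¹ y < x := phi_inv_lt T h
  have h1 := phi_conj T h0
  rw [Equiv.Perm.apply_inv_self] at h1
  calc (T.phi x)⁻¹ * (T.phi y)⁻¹ = (T.phi y * T.phi x)⁻¹ := by rw [mul_inv_rev]
    _ = (T.phi x * T.phi ((T.phi x)⁻¹ y))⁻¹ := by rw [h1]
    _ = (T.phi ((T.phi x)⁻¹ y))⁻¹ * (T.phi x)⁻¹ := by rw [mul_inv_rev]

/-- The cube identity for a family of permutations satisfying the trickle commutation rules. -/
theorem cube_point (ψ : V → Equiv.Perm V)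
    (hfix : ∀ {x y : V}, ¬ y < x → ψ x y = y)
    (hcomm : ∀ {x y : V}, T.graph.Adj x y → ¬ x ≤ y → ¬ y ≤ x → ψ x * ψ y = ψ y * ψ x)
    (hconj : ∀ {x y : V}, y < x → ψ x * ψ y = ψ (ψ x y) * ψ x)
    {x z : V} (hadj : T.graph.Adj x z) (w : V) :
    ψ (ψ x z) (ψ x w) = ψ (ψ z x) (ψ z w) := by
  by_cases h1 : z < x
  · have hzx : ψ z x = x := hfix (fun hh => absurd (h1.trans hh) (lt_irrefl _))
    have hc := hconj h1
    rw [hzx]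
    calc ψ (ψ x z) (ψ x w) = (ψ (ψ x z) * ψ x) w := rfl
      _ = (ψ x * ψ z) w := by rw [← hc]
      _ = ψ x (ψ z w) := rfl
  · by_cases h2 : x < z
    · have hxz : ψ x z = z := hfix (fun hh => absurd (h2.trans hh) (lt_irrefl _))
      have hc := hconj h2
      rw [hxz]
      calc ψ z (ψ x w) = (ψ z * ψ x) w := rfl
        _ = (ψ (ψ z x) * ψ z) w := by rw [← hc]
        _ = ψ (ψ z x) (ψ z w) := rfl
    · have hne : x ≠ z := hadj.ne
      have hxlez : ¬ x ≤ z := fun hh => h2 (lt_of_le_of_ne hh hne)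
      have hzlex : ¬ z ≤ x := fun hh => h1 (lt_of_le_of_ne hh hne.symm)
      have hc := hcomm hadj hxlez hzlex
      rw [hfix h2, hfix h1]
      calc ψ z (ψ x w) = (ψ z * ψ x) w := rfl
        _ = (ψ x * ψ z) w := by rw [← hc]
        _ = ψ x (ψ z w) := rfl

/-- The right complement: `x · φ_x(y) = y · φ_y(x)`. -/
def cR : V → V → V := fun x y => T.phi x y

/-- The left complement: `φ_x⁻¹(y) · x = ... `. -/
def cL : V → V → V := fun x y => (T.phi x)⁻¹ y

theorem adj_phi_inv_iff {x y z : V} (hy : T.graph.InStar x y) (hz : T.graph.InStar x z) :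
    T.graph.Adj ((T.phi x)⁻¹ y) ((T.phi x)⁻¹ z) ↔ T.graph.Adj y z := by
  have := T.adj_phi_iff x ((T.phi x)⁻¹ y) ((T.phi x)⁻¹ z)
    (instar_phi_inv T hy) (instar_phi_inv T hz)
  rw [Equiv.Perm.apply_inv_self, Equiv.Perm.apply_inv_self] at this
  exact this.symm

theorem goodR : Good T.graph.Adj (cR T) := by
  refine ⟨fun h => h.symm, fun h => h.ne, ?_, ?_⟩
  · intro z x y _ _ h
    exact (T.phi z).injective h
  · intro x y z hxy hxz hyz haxz hayz hc
    have hIzx : T.graph.InStar z x := Or.inr haxz.symm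
    have hIzy : T.graph.InStar z y := Or.inr hayz.symm
    have hxyAdj : T.graph.Adj x y := (T.adj_phi_iff z x y hIzx hIzy).mp hc
    have h2 : T.graph.Adj (cR T x z) (cR T x y) :=
      (T.adj_phi_iff x z y (Or.inr haxz) (Or.inr hxyAdj)).mpr hayz.symm
    exact ⟨hxyAdj, h2,
      cube_point T T.phi (fun h => phi_fix T h) (fun ha h1 h2 => phi_comm T ha h1 h2)
        (fun h => phi_conj T h) haxz y⟩

theorem goodL : Good T.graph.Adj (cL T) := by
  refine ⟨fun h => h.symm, fun h => h.ne, ?_, ?_⟩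
  · intro z x y _ _ h
    exact (T.phi z)⁻¹.injective h
  · intro x y z hxy hxz hyz haxz hayz hc
    have hIzx : T.graph.InStar z x := Or.inr haxz.symm
    have hIzy : T.graph.InStar z y := Or.inr hayz.symm
    have hxyAdj : T.graph.Adj x y := (adj_phi_inv_iff T hIzx hIzy).mp hc
    have h2 : T.graph.Adj (cL T x z) (cL T x y) :=
      (adj_phi_inv_iff T (Or.inr haxz) (Or.inr hxyAdj)).mpr hayz.symm
    refine ⟨hxyAdj, h2, ?_⟩
    exact cube_point T (fun v => (T.phi v)⁻¹) (fun h => phi_inv_fix T h)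
      (fun ha h1 h2 => phi_inv_comm T ha h1 h2) (fun h => phi_inv_conj T h) haxz y

end TricklePart


section Corr

variable {V : Type u} [PartialOrder V] (T : TrickleGraph V)

/-- trichotomy for adjacent vertices -/
theorem adj_cases {x y : V} (h : T.graph.Adj x y) :
    y < x ∨ x < y ∨ (¬ x ≤ y ∧ ¬ y ≤ x) := by
  by_cases h1 : y < x
  · exact Or.inl h1
  by_cases h2 : x < y
  · exact Or.inr (Or.inl h2)
  refine Or.inr (Or.inr ⟨fun hle => h2 (lt_of_le_of_ne hle h.ne), fun hle =>
    h1 (lt_of_le_of_ne hle h.ne.symm)⟩)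

/-- The element of the trickle monoid represented by a word. -/
def toM (w : List V) : TrickleMonoid T := PresentedMonoid.mk T.monRels (FreeMonoid.ofList w)

theorem toM_append (u v : List V) : toM T (u ++ v) = toM T u * toM T v := by
  unfold toM
  rw [FreeMonoid.ofList_append, map_mul]

theorem toM_cons (x : V) (w : List V) :
    toM T (x :: w) = PresentedMonoid.of T.monRels x * toM T w := by
  unfold toM
  rw [FreeMonoid.ofList_cons, map_mul]
  rfl

theorem toM_singleton (x : V) : toM T [x] = PresentedMonoid.of T.monRels x := by
  rw [toM_cons]
  show _ * PresentedMonoid.mk T.monRels 1 = _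
  rw [map_one, mul_one]

theorem toM_surj (a : TrickleMonoid T) : ∃ w : List V, a = toM T w :=
  PresentedMonoid.inductionOn a fun f =>
    ⟨FreeMonoid.toList f, by unfold toM; rw [FreeMonoid.ofList_toList]⟩

theorem rel_to_teq {x y : V} (hadj : T.graph.Adj x y) :
    TEq T.graph.Adj (cL T) [T.phi x y, x] [T.phi y x, y] := by
  rcases adj_cases T hadj with h | h | ⟨h1, h2⟩
  · -- y < x
    have hlt : T.phi x y < x := phi_lt T h
    have hadj' : T.graph.Adj (T.phi x y) x := T.adj_of_lt _ x hlt
    have e1 : cL T (T.phi x y) x = x := phi_inv_fix T (fun hh => absurd (hlt.trans hh) (lt_irrefl _))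
    have e2 : cL T x (T.phi x y) = y := Equiv.Perm.inv_apply_self _ _
    have e3 : T.phi y x = x := phi_fix T (fun hh => absurd (h.trans hh) (lt_irrefl _))
    have := step_rel (c := cL T) hadj' ([] : List V)
    rw [e1, e2] at this
    simpa [e3] using this
  · -- x < y
    have hlt : T.phi y x < y := phi_lt T h
    have hadj' : T.graph.Adj y (T.phi y x) := (T.adj_of_lt _ y hlt).symm
    have e1 : cL T y (T.phi y x) = x := Equiv.Perm.inv_apply_self _ _
    have e2 : cL T (T.phi y x) y = y :=
      phi_inv_fix T (fun hh => absurd (hlt.trans hh) (lt_irrefl _))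
    have e3 : T.phi x y = y := phi_fix T (fun hh => absurd (h.trans hh) (lt_irrefl _))
    have := step_rel (c := cL T) hadj' ([] : List V)
    rw [e1, e2] at this
    simpa [e3] using this
  · -- incomparable
    have e3 : T.phi x y = y := phi_fix T (fun hh => h2 hh.le)
    have e4 : T.phi y x = x := phi_fix T (fun hh => h1 hh.le)
    have e1 : cL T y x = x := phi_inv_fix T (fun hh => h1 hh.le)
    have e2 : cL T x y = y := phi_inv_fix T (fun hh => h2 hh.le)
    have := step_rel (c := cL T) hadj.symm ([] : List V)
    rw [e1, e2] at this
    simpa [e3, e4] using this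

theorem rrel_to_con {a b : V} (hadj : T.graph.Adj a b) :
    conGen T.monRels (FreeMonoid.ofList [a, cL T a b]) (FreeMonoid.ofList [b, cL T b a]) := by
  rcases adj_cases T hadj with h | h | ⟨h1, h2⟩
  · -- b < a
    set z := cL T a b with hz
    have hza : z < a := phi_inv_lt T h
    have hphiaz : T.phi a z = b := Equiv.Perm.apply_inv_self _ _
    have hphiza : T.phi z a = a := phi_fix T (fun hh => absurd (hza.trans hh) (lt_irrefl _))
    have hba : cL T b a = a := phi_inv_fix T (fun hh => absurd (h.trans hh) (lt_irrefl _))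
    refine ConGen.Rel.symm (ConGen.Rel.of _ _ ⟨a, z, (T.adj_of_lt z a hza).symm, ?_, ?_⟩)
    · rw [hphiaz, hba]; rfl
    · rw [hphiza]; rfl
  · -- a < b
    set z := cL T b a with hz
    have hzb : z < b := phi_inv_lt T h
    have hphibz : T.phi b z = a := Equiv.Perm.apply_inv_self _ _
    have hphizb : T.phi z b = b := phi_fix T (fun hh => absurd (hzb.trans hh) (lt_irrefl _))
    have hab : cL T a b = b := phi_inv_fix T (fun hh => absurd (h.trans hh) (lt_irrefl _))
    refine ConGen.Rel.of _ _ ⟨b, z, (T.adj_of_lt z b hzb).symm, ?_, ?_⟩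
    · rw [hphibz, hab]; rfl
    · rw [hphizb]; rfl
  · -- incomparable
    have e1 : cL T a b = b := phi_inv_fix T (fun hh => h2 hh.le)
    have e2 : cL T b a = a := phi_inv_fix T (fun hh => h1 hh.le)
    have e3 : T.phi b a = a := phi_fix T (fun hh => h1 hh.le)
    have e4 : T.phi a b = b := phi_fix T (fun hh => h2 hh.le)
    refine ConGen.Rel.of _ _ ⟨b, a, hadj.symm, ?_, ?_⟩
    · rw [e3, e1]; rfl
    · rw [e4, e2]; rfl

theorem toM_eq_iff {u v : List V} :
    toM T u = toM T v ↔ TEq T.graph.Adj (cL T) u v := by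
  constructor
  · intro h
    have hc : conGen T.monRels (FreeMonoid.ofList u) (FreeMonoid.ofList v) := Quotient.eq.mp h
    -- transfer through the congruence
    have main : ∀ (a b : FreeMonoid V), conGen T.monRels a b →
        TEq T.graph.Adj (cL T) (FreeMonoid.toList a) (FreeMonoid.toList b) := by
      intro a b hab
      induction hab with
      | of p q hpq =>
        obtain ⟨x, y, hadj, hp, hq⟩ := hpq
        subst hp; subst hq
        exact rel_to_teq T hadj
      | refl _ => exact TEq.refl _
      | symm _ ih => exact ih.symm (goodL T)
      | trans _ _ ih1 ih2 => exact ih1.trans ih2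
      | mul _ _ ih1 ih2 => exact ih1.congr ih2
    exact main _ _ hc
  · intro h
    have main : ∀ {u v : List V}, Step T.graph.Adj (cL T) u v →
        conGen T.monRels (FreeMonoid.ofList u) (FreeMonoid.ofList v) := by
      intro u v hstep
      obtain ⟨p, q, u', v', ⟨a, b, hadj, hu', hv'⟩, h1, h2⟩ := hstep
      subst hu'; subst hv'; subst h1; subst h2
      rw [FreeMonoid.ofList_append, FreeMonoid.ofList_append,
        FreeMonoid.ofList_append, FreeMonoid.ofList_append]
      exact ConGen.Rel.mul (ConGen.Rel.mul (ConGen.Rel.refl _) (rrel_to_con T hadj))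
        (ConGen.Rel.refl _)
    induction h with
    | refl => rfl
    | tail _ hstep ih => exact ih.trans (Quotient.eq.mpr (main hstep))

theorem step_LR {u v : List V} (h : Step T.graph.Adj (cL T) u v) :
    Step T.graph.Adj (cR T) u.reverse v.reverse := by
  obtain ⟨p, q, u', v', ⟨a, b, hadj, hu', hv'⟩, h1, h2⟩ := h
  subst hu'; subst hv'; subst h1; subst h2
  refine ⟨q.reverse, p.reverse, [cL T a b, a], [cL T b a, b], ?_, by simp, by simp⟩
  rcases adj_cases T hadj with h | h | ⟨h1, h2⟩
  · -- b < a
    set z := cL T a b with hz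
    have hza : z < a := phi_inv_lt T h
    have hba : cL T b a = a := phi_inv_fix T (fun hh => absurd (h.trans hh) (lt_irrefl _))
    refine ⟨z, a, T.adj_of_lt z a hza, ?_, ?_⟩
    · rw [show cR T z a = a from phi_fix T (fun hh => absurd (hza.trans hh) (lt_irrefl _))]
    · rw [hba, show cR T a z = b from Equiv.Perm.apply_inv_self _ _]
  · -- a < b
    set z := cL T b a with hz
    have hzb : z < b := phi_inv_lt T h
    have hab : cL T a b = b := phi_inv_fix T (fun hh => absurd (h.trans hh) (lt_irrefl _))
    refine ⟨b, z, (T.adj_of_lt z b hzb).symm, ?_, ?_⟩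
    · rw [hab, show cR T b z = a from Equiv.Perm.apply_inv_self _ _]
    · rw [show cR T z b = b from phi_fix T (fun hh => absurd (hzb.trans hh) (lt_irrefl _))]
  · have e1 : cL T a b = b := phi_inv_fix T (fun hh => h2 hh.le)
    have e2 : cL T b a = a := phi_inv_fix T (fun hh => h1 hh.le)
    refine ⟨b, a, hadj.symm, ?_, ?_⟩
    · rw [e1, show cR T b a = a from phi_fix T (fun hh => h1 hh.le)]
    · rw [e2, show cR T a b = b from phi_fix T (fun hh => h2 hh.le)]

theorem step_RL {u v : List V} (h : Step T.graph.Adj (cR T) u v) :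
    Step T.graph.Adj (cL T) u.reverse v.reverse := by
  obtain ⟨p, q, u', v', ⟨a, b, hadj, hu', hv'⟩, h1, h2⟩ := h
  subst hu'; subst hv'; subst h1; subst h2
  refine ⟨q.reverse, p.reverse, [cR T a b, a], [cR T b a, b], ?_, by simp, by simp⟩
  rcases adj_cases T hadj with h | h | ⟨h1, h2⟩
  · -- b < a : pair ([phi a b, a], [a, b]) ; L-instance (z, a) with z = phi a b
    set z := cR T a b with hz
    have hza : z < a := phi_lt T h
    have hba : cR T b a = a := phi_fix T (fun hh => absurd (h.trans hh) (lt_irrefl _))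
    refine ⟨z, a, T.adj_of_lt z a hza, ?_, ?_⟩
    · rw [show cL T z a = a from phi_inv_fix T (fun hh => absurd (hza.trans hh) (lt_irrefl _))]
    · rw [hba, show cL T a z = b from Equiv.Perm.inv_apply_self _ _]
  · -- a < b : pair ([b, a], [phi b a, b]) ; L-instance (b, z) with z = phi b a
    set z := cR T b a with hz
    have hzb : z < b := phi_lt T h
    have hab : cR T a b = b := phi_fix T (fun hh => absurd (h.trans hh) (lt_irrefl _))
    refine ⟨b, z, (T.adj_of_lt z b hzb).symm, ?_, ?_⟩
    · rw [hab, show cL T b z = a from Equiv.Perm.inv_apply_self _ _]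
    · rw [show cL T z b = b from phi_inv_fix T (fun hh => absurd (hzb.trans hh) (lt_irrefl _))]
  · have e1 : cR T a b = b := phi_fix T (fun hh => h2 hh.le)
    have e2 : cR T b a = a := phi_fix T (fun hh => h1 hh.le)
    refine ⟨b, a, hadj.symm, ?_, ?_⟩
    · rw [e1, show cL T b a = a from phi_inv_fix T (fun hh => h1 hh.le)]
    · rw [e2, show cL T a b = b from phi_inv_fix T (fun hh => h2 hh.le)]

theorem teq_LR {u v : List V} (h : TEq T.graph.Adj (cL T) u v) :
    TEq T.graph.Adj (cR T) u.reverse v.reverse := by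
  induction h with
  | refl => exact TEq.refl _
  | tail _ hstep ih => exact ih.trans (Relation.ReflTransGen.single (step_LR T hstep))

theorem teq_RL {u v : List V} (h : TEq T.graph.Adj (cR T) u v) :
    TEq T.graph.Adj (cL T) u.reverse v.reverse := by
  induction h with
  | refl => exact TEq.refl _
  | tail _ hstep ih => exact ih.trans (Relation.ReflTransGen.single (step_RL T hstep))

end Corr

section Main

variable {V : Type u} [PartialOrder V] (T : TrickleGraph V) {X : Set V}

theorem parX_R (hpar : T.IsParabolicSet X) {x y : V} (hadj : T.graph.Adj x y)
    (hx : x ∈ X) (hy : y ∈ X) : cR T x y ∈ X := by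
  have h := hpar x hx
  have hmem : T.phi x y ∈ T.phi x '' {z | z ∈ X ∧ T.graph.InStar x z} :=
    ⟨y, ⟨hy, Or.inr hadj⟩, rfl⟩
  rw [h] at hmem
  exact hmem.1

theorem parX_L (hpar : T.IsParabolicSet X) {x y : V} (hadj : T.graph.Adj x y)
    (hx : x ∈ X) (hy : y ∈ X) : cL T x y ∈ X := by
  have h := hpar x hx
  have hy' : y ∈ {z | z ∈ X ∧ T.graph.InStar x z} := ⟨hy, Or.inr hadj⟩
  rw [← h] at hy'
  obtain ⟨z, hz, hzy⟩ := hy'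
  have he : cL T x y = z := by
    show (T.phi x)⁻¹ y = z
    rw [← hzy]
    exact Equiv.Perm.inv_apply_self _ _
  rw [he]
  exact hz.1

theorem parX_back (hpar : T.IsParabolicSet X) {x y : V} (hadj : T.graph.Adj x y)
    (hx : x ∈ X) (hc : cL T x y ∈ X) : y ∈ X ∧ cL T y x ∈ X := by
  have hyX : y ∈ X := by
    by_cases hlt : y < x
    · have hz : cL T x y ∈ {z | z ∈ X ∧ T.graph.InStar x z} :=
        ⟨hc, instar_phi_inv T (Or.inr hadj)⟩
      have hmem : T.phi x (cL T x y) ∈ T.phi x '' {z | z ∈ X ∧ T.graph.InStar x z} :=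
        Set.mem_image_of_mem _ hz
      rw [hpar x hx] at hmem
      have he : T.phi x (cL T x y) = y := Equiv.Perm.apply_inv_self _ _
      rw [he] at hmem
      exact hmem.1
    · have he : cL T x y = y := phi_inv_fix T hlt
      rw [← he]
      exact hc
  refine ⟨hyX, ?_⟩
  by_cases hlt : x < y
  · exact parX_L T hpar hadj.symm hyX hx
  · rw [show cL T y x = x from phi_inv_fix T hlt]
    exact hx

theorem step_letters (hpar : T.IsParabolicSet X) {u v : List V}
    (h : Step T.graph.Adj (cL T) u v) (hu : ∀ a ∈ u, a ∈ X) : ∀ a ∈ v, a ∈ X := by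
  obtain ⟨p, q, u', v', ⟨a, b, hadj, hu', hv'⟩, h1, h2⟩ := h
  subst hu'; subst hv'; subst h1; subst h2
  have haX : a ∈ X := hu a (by simp)
  have hcX : cL T a b ∈ X := hu _ (by simp)
  obtain ⟨hbX, hcba⟩ := parX_back T hpar hadj haX hcX
  intro z hz
  rcases List.mem_append.mp hz with hz | hz
  · rcases List.mem_append.mp hz with hz | hz
    · exact hu z (by simp [hz])
    · rcases List.mem_cons.mp hz with rfl | hz
      · exact hbX
      · rcases List.mem_cons.mp hz with rfl | hz
        · exact hcba
        · exact absurd hz List.not_mem_nil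
  · exact hu z (by simp [hz])

theorem teq_letters (hpar : T.IsParabolicSet X) {u v : List V}
    (h : TEq T.graph.Adj (cL T) u v) (hu : ∀ a ∈ u, a ∈ X) : ∀ a ∈ v, a ∈ X := by
  induction h with
  | refl => exact hu
  | tail _ hstep ih => exact step_letters T hpar hstep ih

theorem mem_closure_iff (a : TrickleMonoid T) :
    a ∈ Submonoid.closure ((fun x : V => PresentedMonoid.of T.monRels x) '' X) ↔
    ∃ w : List V, (∀ b ∈ w, b ∈ X) ∧ a = toM T w := by
  constructor
  · intro h
    induction h using Submonoid.closure_induction with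
    | mem x hx =>
      obtain ⟨y, hy, rfl⟩ := hx
      exact ⟨[y], by simpa using hy, (toM_singleton T y).symm⟩
    | one => exact ⟨[], by simp, (map_one _).symm⟩
    | mul x y hx hy ihx ihy =>
      obtain ⟨w₁, hw₁, rfl⟩ := ihx
      obtain ⟨w₂, hw₂, rfl⟩ := ihy
      refine ⟨w₁ ++ w₂, ?_, (toM_append T w₁ w₂).symm⟩
      intro b hb
      rcases List.mem_append.mp hb with hb | hb
      · exact hw₁ b hb
      · exact hw₂ b hb
  · rintro ⟨w, hwX, rfl⟩
    induction w with
    | nil => exact (show toM T [] = 1 from map_one _) ▸ one_mem _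
    | cons x w' ih =>
      rw [toM_cons]
      exact mul_mem (Submonoid.subset_closure ⟨x, hwX x (by simp), rfl⟩)
        (ih (fun b hb => hwX b (by simp [hb])))

/-- the defining relation of the trickle monoid, in `toM` form. -/
theorem rel_toM {x y : V} (hadj : T.graph.Adj x y) :
    toM T [T.phi x y, x] = toM T [T.phi y x, y] :=
  (toM_eq_iff T).mpr (rel_to_teq T hadj)

end Main

end TrickleProof

/-- **Proposition 7.8.** Let `Γ` be a preGarside trickle graph. A submonoid `N` of `Tr⁺(Γ)` is
a parabolic submonoid if and only if `N` is the submonoid generated by the vertices of some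
parabolic subgraph `Γ₁` of `Γ` (equivalently, the image of `Tr⁺(Γ₁)` under the canonical
homomorphism `Tr⁺(Γ₁) → Tr⁺(Γ)`). -/
theorem TrickleMonoid.isParabolic_iff {V : Type u} [PartialOrder V] (T : TrickleGraph V)
    (hmu : ∀ x : V, T.mu x = ⊤) (N : Submonoid (TrickleMonoid T)) :
    N.IsParabolic ↔
      ∃ X : Set V, T.IsParabolicSet X ∧
        N = Submonoid.closure ((fun x : V => PresentedMonoid.of T.monRels x) '' X) := by
  open TrickleProof in
  constructor
  · rintro ⟨hspec, hlcmL, hlcmR⟩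
    refine ⟨{x : V | PresentedMonoid.of T.monRels x ∈ N}, ?_, ?_⟩
    · -- the set of generators lying in `N` is a parabolic subgraph
      intro x hx
      apply Set.Subset.antisymm
      · rintro _ ⟨z, ⟨hzX, hzS⟩, rfl⟩
        refine ⟨?_, T.inStar_phi x z hzS⟩
        by_cases hlt : z < x
        · have hadj : T.graph.Adj x z := (T.adj_of_lt z x hlt).symm
          have hrel : toM T [T.phi x z, x] = toM T [x, z] := by
            rw [rel_toM T hadj, phi_fix T (fun hh => absurd (hlt.trans hh) (lt_irrefl _))]
          have hprod : PresentedMonoid.of T.monRels (T.phi x z) *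
              PresentedMonoid.of T.monRels x ∈ N := by
            have h1 : toM T [T.phi x z, x] =
                PresentedMonoid.of T.monRels (T.phi x z) * PresentedMonoid.of T.monRels x := by
              rw [toM_cons, toM_singleton]
            have h2 : toM T [x, z] =
                PresentedMonoid.of T.monRels x * PresentedMonoid.of T.monRels z := by
              rw [toM_cons, toM_singleton]
            rw [← h1, hrel, h2]
            exact mul_mem hx hzX
          exact (hspec _ _ hprod).1
        · show PresentedMonoid.of T.monRels (T.phi x z) ∈ N
          rw [phi_fix T hlt]
          exact hzX
      · rintro y ⟨hyX, hyS⟩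
        refine ⟨(T.phi x)⁻¹ y, ⟨?_, instar_phi_inv T hyS⟩, Equiv.Perm.apply_inv_self _ _⟩
        by_cases hlt : y < x
        · have hzlt : (T.phi x)⁻¹ y < x := phi_inv_lt T hlt
          have hadj : T.graph.Adj x ((T.phi x)⁻¹ y) := (T.adj_of_lt _ x hzlt).symm
          have hrel : toM T [y, x] = toM T [x, (T.phi x)⁻¹ y] := by
            have h0 := rel_toM T hadj
            rw [Equiv.Perm.apply_inv_self,
              phi_fix T (fun hh => absurd (hzlt.trans hh) (lt_irrefl _))] at h0
            exact h0
          have hprod : PresentedMonoid.of T.monRels x *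
              PresentedMonoid.of T.monRels ((T.phi x)⁻¹ y) ∈ N := by
            have h1 : toM T [y, x] =
                PresentedMonoid.of T.monRels y * PresentedMonoid.of T.monRels x := by
              rw [toM_cons, toM_singleton]
            have h2 : toM T [x, (T.phi x)⁻¹ y] = PresentedMonoid.of T.monRels x *
                PresentedMonoid.of T.monRels ((T.phi x)⁻¹ y) := by
              rw [toM_cons, toM_singleton]
            rw [← h2, ← hrel, h1]
            exact mul_mem hyX hx
          exact (hspec _ _ hprod).2
        · show (T.phi x)⁻¹ y ∈ _
          rw [phi_inv_fix T hlt]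
          exact hyX
    · -- `N` is generated by the vertices it contains
      refine le_antisymm ?_ (Submonoid.closure_le.mpr ?_)
      · intro a ha
        obtain ⟨w, rfl⟩ := toM_surj T a
        induction w with
        | nil => exact one_mem _
        | cons x w' ih =>
          rw [toM_cons] at ha ⊢
          obtain ⟨h1, h2⟩ := hspec _ _ ha
          exact mul_mem (Submonoid.subset_closure ⟨x, h1, rfl⟩) (ih h2)
      · rintro _ ⟨x, hx, rfl⟩
        exact hx
  · rintro ⟨X, hpar, rfl⟩
    have hspec : Submonoid.IsSpecial
        (Submonoid.closure ((fun x : V => PresentedMonoid.of T.monRels x) '' X)) := by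
      intro a b hab
      obtain ⟨u, rfl⟩ := toM_surj T a
      obtain ⟨v, rfl⟩ := toM_surj T b
      rw [← toM_append] at hab
      obtain ⟨w, hwX, hw⟩ := (mem_closure_iff T _).mp hab
      have hletters : ∀ z ∈ u ++ v, z ∈ X :=
        teq_letters T hpar (((toM_eq_iff T).mp hw).symm (goodL T)) hwX
      constructor
      · exact (mem_closure_iff T _).mpr ⟨u, fun z hz => hletters z (by simp [hz]), rfl⟩
      · exact (mem_closure_iff T _).mpr ⟨v, fun z hz => hletters z (by simp [hz]), rfl⟩
    refine ⟨hspec, ?_, ?_⟩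
    · -- closed under left lcms
      intro a b m ha hb hm
      obtain ⟨u, huX, rfl⟩ := (mem_closure_iff T a).mp ha
      obtain ⟨v, hvX, rfl⟩ := (mem_closure_iff T b).mp hb
      obtain ⟨⟨⟨c₁, hc1⟩, ⟨c₂, hc2⟩⟩, hmin⟩ := hm
      obtain ⟨s, rfl⟩ := toM_surj T c₁
      obtain ⟨t, rfl⟩ := toM_surj T c₂
      have hst : TEq T.graph.Adj (cL T) (u ++ s) (v ++ t) := (toM_eq_iff T).mp
        (by rw [toM_append, toM_append, hc1, hc2])
      obtain ⟨u₁, v₁, hu₁X, hv₁X, -, -, hmain, -⟩ :=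
        rev (goodL T) X (fun x y hadj hx hy => parX_L T hpar hadj hx hy)
          (u.length + v.length) u v le_rfl huX hvX ⟨s, t, hst⟩
      have hCN : toM T (u ++ u₁) ∈
          Submonoid.closure ((fun x : V => PresentedMonoid.of T.monRels x) '' X) :=
        (mem_closure_iff T _).mpr ⟨u ++ u₁, fun z hz => by
          rcases List.mem_append.mp hz with hz | hz
          · exact huX z hz
          · exact hu₁X z hz, rfl⟩
      have hmC : DvdL m (toM T (u ++ u₁)) := by
        refine hmin _ ⟨toM T u₁, (toM_append T u u₁).symm⟩ ⟨toM T v₁, ?_⟩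
        rw [← toM_append]
        exact ((toM_eq_iff T).mpr hmain).symm
      obtain ⟨d, hd⟩ := hmC
      exact (hspec m d (by rw [hd]; exact hCN)).1
    · -- closed under right lcms
      intro a b m ha hb hm
      obtain ⟨u, huX, rfl⟩ := (mem_closure_iff T a).mp ha
      obtain ⟨v, hvX, rfl⟩ := (mem_closure_iff T b).mp hb
      obtain ⟨⟨⟨c₁, hc1⟩, ⟨c₂, hc2⟩⟩, hmin⟩ := hm
      obtain ⟨s, rfl⟩ := toM_surj T c₁
      obtain ⟨t, rfl⟩ := toM_surj T c₂
      have hst : TEq T.graph.Adj (cL T) (s ++ u) (t ++ v) := (toM_eq_iff T).mp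
        (by rw [toM_append, toM_append, hc1, hc2])
      have hstR : TEq T.graph.Adj (cR T) (u.reverse ++ s.reverse)
          (v.reverse ++ t.reverse) := by
        have := teq_LR T hst
        simpa [List.reverse_append] using this
      obtain ⟨u₁, v₁, hu₁X, hv₁X, -, -, hmain, -⟩ :=
        rev (goodR T) X (fun x y hadj hx hy => parX_R T hpar hadj hx hy)
          (u.reverse.length + v.reverse.length) u.reverse v.reverse le_rfl
          (fun z hz => huX z (List.mem_reverse.mp hz))
          (fun z hz => hvX z (List.mem_reverse.mp hz))
          ⟨s.reverse, t.reverse, hstR⟩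
      have hmainL : toM T (u₁.reverse ++ u) = toM T (v₁.reverse ++ v) := by
        apply (toM_eq_iff T).mpr
        have := teq_RL T hmain
        simpa [List.reverse_append] using this
      have hCN : toM T (u₁.reverse ++ u) ∈
          Submonoid.closure ((fun x : V => PresentedMonoid.of T.monRels x) '' X) :=
        (mem_closure_iff T _).mpr ⟨u₁.reverse ++ u, fun z hz => by
          rcases List.mem_append.mp hz with hz | hz
          · exact hu₁X z (List.mem_reverse.mp hz)
          · exact huX z hz, rfl⟩
      have hmC : DvdR m (toM T (u₁.reverse ++ u)) := by
        refine hmin _ ⟨toM T u₁.reverse, (toM_append T u₁.reverse u).symm⟩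
          ⟨toM T v₁.reverse, ?_⟩
        rw [← toM_append, ← hmainL]
      obtain ⟨d, hd⟩ := hmC
      exact (hspec d m (by rw [hd]; exact hCN)).2
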